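/- Let F be a finite field with q = |F| elements and let n ≥ 2. Then q^(n²−2) < |PSL_n(F)| ≤ (1 − q⁻²)·q^(n²−1), where PSL_n(F) denotes the quotient of SL_n(F) by its center and the inequalities hold in the real numbers. -/
import Mathlib

private lemma stmt6_wei (x : ℝ) (hx0 : 0 ≤ x) (hx1 : x ≤ 1/2) (m : ℕ) :
    1 - ∑ j ∈ Finset.range m, x ^ (j + 2) ≤ ∏ j ∈ Finset.range m, (1 - x ^ (j + 2)) := by
  induction m with
  | zero => simp
  | succ m ih =>
    rw [Finset.prod_range_succ, Finset.sum_range_succ]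
    have hb0 : (0:ℝ) ≤ x ^ (m + 2) := pow_nonneg hx0 _
    have hb1 : x ^ (m + 2) ≤ 1 := pow_le_one₀ hx0 (by linarith)
    have hS : (0:ℝ) ≤ ∑ j ∈ Finset.range m, x ^ (j + 2) :=
      Finset.sum_nonneg fun i _ => pow_nonneg hx0 _
    nlinarith [mul_nonneg (sub_nonneg.mpr ih) (sub_nonneg.mpr hb1), mul_nonneg hS hb0]

private lemma stmt6_prod (r : ℝ) (hr : 2 ≤ r) (n : ℕ) (hn : 2 ≤ n) :
    (r - 1) ^ 2 * r ^ (n ^ 2 - 2) < ∏ i ∈ Finset.range n, (r ^ n - r ^ i) ∧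
      ∏ i ∈ Finset.range n, (r ^ n - r ^ i) ≤
        (r - 1) * ((1 - (r ^ 2)⁻¹) * r ^ (n ^ 2 - 1)) := by
  have hr0 : (0:ℝ) < r := by linarith
  set x := r⁻¹ with hxdef
  have hx0 : 0 < x := inv_pos.mpr hr0
  have hrx : r * x = 1 := mul_inv_cancel₀ (ne_of_gt hr0)
  have hx2 : x ≤ 1/2 := by nlinarith
  have key : ∀ i, i ≤ n → r ^ n * x ^ (n - i) = r ^ i := by
    intro i hi
    rw [hxdef, inv_pow, ← pow_sub₀ r (ne_of_gt hr0) (Nat.sub_le n i)]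
    congr 1
    omega
  have h1 : ∏ i ∈ Finset.range n, (r ^ n - r ^ i)
      = r ^ (n ^ 2) * ∏ j ∈ Finset.range n, (1 - x ^ (j + 1)) := by
    have e1 : ∏ i ∈ Finset.range n, (r ^ n - r ^ i)
        = ∏ i ∈ Finset.range n, r ^ n * (1 - x ^ (n - i)) := by
      refine Finset.prod_congr rfl fun i hi => ?_
      rw [mul_sub, mul_one, key i (Finset.mem_range.mp hi).le]
    rw [e1, Finset.prod_mul_distrib, Finset.prod_const, Finset.card_range, ← pow_mul]
    congr 1
    · congr 1
      exact (pow_two n).symm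
    · rw [← Finset.prod_range_reflect (fun j => 1 - x ^ (j + 1)) n]
      refine Finset.prod_congr rfl fun i hi => ?_
      have := Finset.mem_range.mp hi
      congr 2
      omega
  obtain ⟨k, rfl⟩ : ∃ k, n = k + 2 := ⟨n - 2, by omega⟩
  have split1 : ∏ j ∈ Finset.range (k + 2), (1 - x ^ (j + 1))
      = (∏ j ∈ Finset.range (k + 1), (1 - x ^ (j + 2))) * (1 - x) := by
    rw [Finset.prod_range_succ', pow_one]
  have split2 : ∏ j ∈ Finset.range (k + 1), (1 - x ^ (j + 2))
      = (∏ j ∈ Finset.range k, (1 - x ^ (j + 3))) * (1 - x ^ 2) := by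
    rw [Finset.prod_range_succ']
  -- bounds on pieces
  have h1mx : (0:ℝ) < 1 - x := by linarith
  have hQwei := stmt6_wei x hx0.le hx2 (k + 1)
  have hSval : ∑ j ∈ Finset.range (k+1), x ^ (j+2)
      = x ^ 2 * ∑ j ∈ Finset.range (k+1), x ^ j := by
    rw [Finset.mul_sum]
    exact Finset.sum_congr rfl fun j _ => by ring
  have hgeom : ∑ j ∈ Finset.range (k+1), x ^ j < 2 := by
    have hx1' : x ≠ 1 := by intro h; rw [h] at hx2; norm_num at hx2
    rw [geom_sum_eq hx1']
    have hxm : 0 < x ^ (k+1) := pow_pos hx0 _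
    rw [div_lt_iff_of_neg (by linarith : x - 1 < 0)]
    linarith
  have hSx : ∑ j ∈ Finset.range (k+1), x ^ (j+2) < x := by
    rw [hSval]
    nlinarith [mul_lt_mul_of_pos_left hgeom (pow_pos hx0 2),
      mul_nonneg hx0.le (by linarith : (0:ℝ) ≤ 1 - 2*x)]
  have hQlow : 1 - x < ∏ j ∈ Finset.range (k + 1), (1 - x ^ (j + 2)) := by
    calc 1 - x < 1 - ∑ j ∈ Finset.range (k+1), x ^ (j+2) := by linarith
      _ ≤ _ := hQwei
  have hR1 : ∏ j ∈ Finset.range k, (1 - x ^ (j + 3)) ≤ 1 :=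
    Finset.prod_le_one (fun i _ => by nlinarith [pow_le_one₀ hx0.le (by linarith : x ≤ 1) (n := i+3)])
      (fun i _ => by nlinarith [pow_nonneg hx0.le (i+3)])
  have h1mx2 : (0:ℝ) ≤ 1 - x ^ 2 := by nlinarith
  have hPup : ∏ j ∈ Finset.range (k + 2), (1 - x ^ (j + 1)) ≤ (1 - x ^ 2) * (1 - x) := by
    rw [split1, split2]
    nlinarith [mul_nonneg (mul_nonneg (sub_nonneg.mpr hR1) h1mx2) h1mx.le]
  have hPlow : (1 - x) ^ 2 < ∏ j ∈ Finset.range (k + 2), (1 - x ^ (j + 1)) := by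
    rw [split1]
    nlinarith [mul_lt_mul_of_pos_right hQlow h1mx]
  set N := (k + 2) ^ 2 with hNdef
  have hN4 : 4 ≤ N := by simp [hNdef]; nlinarith
  have hN2 : r ^ N = r ^ (N - 2) * r ^ 2 := by
    rw [← pow_add]
    congr 1
  have hN1 : r ^ N = r ^ (N - 1) * r ^ 1 := by
    rw [← pow_add]
    congr 1
  have hrx1 : r * (1 - x) = r - 1 := by rw [mul_sub, mul_one, hrx]
  have hrNpos : (0:ℝ) < r ^ N := pow_pos hr0 N
  constructor
  · have e2 : r ^ N * (1 - x) ^ 2 = (r - 1) ^ 2 * r ^ (N - 2) := by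
      calc r ^ N * (1 - x) ^ 2 = r ^ (N - 2) * (r * (1 - x)) ^ 2 := by rw [hN2]; ring
        _ = (r - 1) ^ 2 * r ^ (N - 2) := by rw [hrx1]; ring
    rw [h1]
    calc (r - 1) ^ 2 * r ^ (N - 2) = r ^ N * (1 - x) ^ 2 := e2.symm
      _ < r ^ N * ∏ j ∈ Finset.range (k + 2), (1 - x ^ (j + 1)) :=
          mul_lt_mul_of_pos_left hPlow hrNpos
  · have e3 : r ^ N * ((1 - x ^ 2) * (1 - x))
        = (r - 1) * ((1 - (r ^ 2)⁻¹) * r ^ (N - 1)) := by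
      have hx2eq : x ^ 2 = (r ^ 2)⁻¹ := by rw [hxdef, inv_pow]
      calc r ^ N * ((1 - x ^ 2) * (1 - x))
          = (1 - x ^ 2) * (r ^ (N - 1) * (r * (1 - x))) := by rw [hN1]; ring
        _ = (r - 1) * ((1 - (r ^ 2)⁻¹) * r ^ (N - 1)) := by rw [hrx1, hx2eq]; ring
    rw [h1]
    calc r ^ N * ∏ j ∈ Finset.range (k + 2), (1 - x ^ (j + 1))
        ≤ r ^ N * ((1 - x ^ 2) * (1 - x)) := mul_le_mul_of_nonneg_left hPup hrNpos.le
      _ = _ := e3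

/-- Lemma 2.3(i): for a finite field `F` with `q` elements and `n ≥ 2`,
`q^(n²−2) < |PSL_n(F)| ≤ (1 − q⁻²)·q^(n²−1)`. -/
theorem stmt6 (F : Type*) [Field F] [Fintype F] (q n : ℕ) (hq : Fintype.card F = q)
    (hn : 2 ≤ n) :
    (q : ℝ) ^ (n ^ 2 - 2) <
        (Nat.card (Matrix.SpecialLinearGroup (Fin n) F ⧸
          Subgroup.center (Matrix.SpecialLinearGroup (Fin n) F)) : ℝ) ∧
      (Nat.card (Matrix.SpecialLinearGroup (Fin n) F ⧸
          Subgroup.center (Matrix.SpecialLinearGroup (Fin n) F)) : ℝ) ≤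
        (1 - ((q : ℝ) ^ 2)⁻¹) * (q : ℝ) ^ (n ^ 2 - 1) := by
  classical
  have hq2 : 2 ≤ q := hq ▸ Fintype.one_lt_card
  -- cardinality of GL
  have hGL : Nat.card (GL (Fin n) F) = ∏ i ∈ Finset.range n, (q ^ n - q ^ i) := by
    rw [Matrix.card_GL_field, hq]
    exact Fin.prod_univ_eq_prod_range (fun i => q ^ n - q ^ i) n
  -- det is surjective
  have hdetsurj : Function.Surjective
      (Matrix.GeneralLinearGroup.det : GL (Fin n) F →* Fˣ) := by
    intro u
    have hdet : Matrix.det (Matrix.diagonal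
        (Function.update (fun _ => (1:F)) (⟨0, by omega⟩ : Fin n) (u : F))) = (u : F) := by
      rw [Matrix.det_diagonal, Finset.prod_update_of_mem (Finset.mem_univ _)]
      simp
    refine ⟨Matrix.GeneralLinearGroup.mkOfDetNeZero _ (hdet ▸ u.ne_zero), ?_⟩
    apply Units.ext
    exact hdet
  -- the kernel of det is SL
  have hker : Nat.card (MonoidHom.ker
        (Matrix.GeneralLinearGroup.det : GL (Fin n) F →* Fˣ))
      = Nat.card (Matrix.SpecialLinearGroup (Fin n) F) := by
    refine Nat.card_congr ⟨fun g => ⟨(g.1 : Matrix (Fin n) (Fin n) F), ?_⟩,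
      fun A => ⟨Matrix.SpecialLinearGroup.toGL A, ?_⟩, fun g => ?_, fun A => ?_⟩
    · have h := congrArg Units.val g.2
      simpa using h
    · exact Matrix.SpecialLinearGroup.coeToGL_det A
    · exact Subtype.ext (Units.ext rfl)
    · exact Subtype.ext rfl
  have hGLcard : Nat.card (GL (Fin n) F)
      = (q - 1) * Nat.card (Matrix.SpecialLinearGroup (Fin n) F) := by
    rw [Subgroup.card_eq_card_quotient_mul_card_subgroup
        (MonoidHom.ker (Matrix.GeneralLinearGroup.det : GL (Fin n) F →* Fˣ)), hker,
      Nat.card_congr (QuotientGroup.quotientKerEquivOfSurjective _ hdetsurj).toEquiv]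
    congr 1
    rw [Nat.card_units, Nat.card_eq_fintype_card, hq]
  -- the center
  have hd1 : 1 ≤ Nat.card (Subgroup.center (Matrix.SpecialLinearGroup (Fin n) F)) :=
    Nat.card_pos
  have hdle : Nat.card (Subgroup.center (Matrix.SpecialLinearGroup (Fin n) F)) ≤ q - 1 := by
    have e := Matrix.SpecialLinearGroup.center_equiv_rootsOfUnity'
      (R := F) (⟨0, by omega⟩ : Fin n)
    rw [Nat.card_congr e.toEquiv]
    calc Nat.card (rootsOfUnity (Fintype.card (Fin n)) F) ≤ Nat.card Fˣ :=
          Nat.card_le_card_of_injective _ (Subgroup.subtype_injective _)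
      _ = q - 1 := by rw [Nat.card_units, Nat.card_eq_fintype_card, hq]
  have hPSL : Nat.card (Matrix.SpecialLinearGroup (Fin n) F)
      = Nat.card (Matrix.SpecialLinearGroup (Fin n) F ⧸
          Subgroup.center (Matrix.SpecialLinearGroup (Fin n) F))
        * Nat.card (Subgroup.center (Matrix.SpecialLinearGroup (Fin n) F)) :=
    Subgroup.card_eq_card_quotient_mul_card_subgroup _
  -- pass to the reals
  set p := Nat.card (Matrix.SpecialLinearGroup (Fin n) F ⧸
      Subgroup.center (Matrix.SpecialLinearGroup (Fin n) F)) with hp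
  set d := Nat.card (Subgroup.center (Matrix.SpecialLinearGroup (Fin n) F)) with hd
  obtain ⟨lo, up⟩ := stmt6_prod (q : ℝ) (by exact_mod_cast hq2) n hn
  have hGcast : ((Nat.card (GL (Fin n) F)) : ℝ)
      = ∏ i ∈ Finset.range n, ((q:ℝ) ^ n - (q:ℝ) ^ i) := by
    rw [hGL, Nat.cast_prod]
    refine Finset.prod_congr rfl fun i hi => ?_
    have h : q ^ i ≤ q ^ n := Nat.pow_le_pow_right (by omega) (Finset.mem_range.mp hi).le
    rw [Nat.cast_sub h]
    push_cast
    ring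
  have hg : ((q:ℝ) - 1) * ((p:ℝ) * (d:ℝ)) = ∏ i ∈ Finset.range n, ((q:ℝ) ^ n - (q:ℝ) ^ i) := by
    rw [← hGcast, hGLcard, hPSL]
    rw [Nat.cast_mul, Nat.cast_mul, Nat.cast_sub (by omega : 1 ≤ q)]
    push_cast
    ring
  have hdr : (d:ℝ) ≤ (q:ℝ) - 1 := by
    calc (d:ℝ) ≤ ((q - 1 : ℕ) : ℝ) := Nat.cast_le.mpr hdle
      _ = (q:ℝ) - 1 := by rw [Nat.cast_sub (by omega : 1 ≤ q)]; norm_num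
  have hd1r : (1:ℝ) ≤ (d:ℝ) := by exact_mod_cast hd1
  have hr1 : (1:ℝ) ≤ (q:ℝ) - 1 := by
    have : (2:ℝ) ≤ (q:ℝ) := by exact_mod_cast hq2
    linarith
  have hppos : (0:ℝ) ≤ (p:ℝ) := Nat.cast_nonneg p
  constructor
  · have key : ((q:ℝ) - 1) ^ 2 * (q:ℝ) ^ (n ^ 2 - 2) < ((q:ℝ) - 1) ^ 2 * (p:ℝ) := by
      calc ((q:ℝ) - 1) ^ 2 * (q:ℝ) ^ (n ^ 2 - 2)
          < ∏ i ∈ Finset.range n, ((q:ℝ) ^ n - (q:ℝ) ^ i) := lo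
        _ = ((q:ℝ) - 1) * ((p:ℝ) * (d:ℝ)) := hg.symm
        _ ≤ ((q:ℝ) - 1) ^ 2 * (p:ℝ) := by nlinarith [mul_nonneg (by linarith : (0:ℝ) ≤ (q:ℝ) - 1) hppos]
    exact lt_of_mul_lt_mul_left key (by positivity)
  · have key : ((q:ℝ) - 1) * (p:ℝ)
        ≤ ((q:ℝ) - 1) * ((1 - ((q:ℝ) ^ 2)⁻¹) * (q:ℝ) ^ (n ^ 2 - 1)) := by
      calc ((q:ℝ) - 1) * (p:ℝ) ≤ ((q:ℝ) - 1) * ((p:ℝ) * (d:ℝ)) := by nlinarith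
        _ = ∏ i ∈ Finset.range n, ((q:ℝ) ^ n - (q:ℝ) ^ i) := hg
        _ ≤ _ := up
    exact le_of_mul_le_mul_left key (by linarith)
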